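/- Under the recursion z^(k) = P_{i_k} z^(k−1) + η̃_{i_k} ã_{i_k} with i.i.d. row choices P(i_k=i)=p_i, unit vectors ã_i spanning ℝⁿ, P = Σ_i p_i (I − ã_i ã_iᵀ), and λ := λ_max(P) < 1, for every k ≥ 0: E‖z^(k)‖² ≤ λ^k ‖z^(0)‖² + (Σ_i p_i η̃_i²)/(1 − λ). -/

import Mathlib

open Matrix
open scoped InnerProductSpace

/-- One noisy Kaczmarz step on the error vector: `z ↦ P_i z + η̃_i ã_i`. -/
def kstep {n m : ℕ} (a : Fin m → EuclideanSpace ℝ (Fin n)) (η : Fin m → ℝ)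
    (i : Fin m) (z : EuclideanSpace ℝ (Fin n)) : EuclideanSpace ℝ (Fin n) :=
  WithLp.toLp 2 (((1 : Matrix (Fin n) (Fin n) ℝ) - vecMulVec (a i) (a i)).mulVec z
    + η i • (show Fin n → ℝ from a i) : Fin n → ℝ)

/-- The error vector after applying the steps indexed by `s : Fin k → Fin m`
in order, starting from `z0`. -/
def ktraj {n m : ℕ} (a : Fin m → EuclideanSpace ℝ (Fin n)) (η : Fin m → ℝ)
    (z0 : EuclideanSpace ℝ (Fin n)) {k : ℕ} (s : Fin k → Fin m) :
    EuclideanSpace ℝ (Fin n) :=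
  (List.ofFn s).foldl (fun z i => kstep a η i z) z0

/-- Expected squared error after `k` i.i.d. random steps, the expectation written
as a weighted sum over all row-index sequences of length `k`. -/
noncomputable def kMSE {n m : ℕ} (a : Fin m → EuclideanSpace ℝ (Fin n))
    (η : Fin m → ℝ) (p : Fin m → ℝ) (z0 : EuclideanSpace ℝ (Fin n)) (k : ℕ) : ℝ :=
  ∑ s : Fin k → Fin m, (∏ j, p (s j)) * ‖ktraj a η z0 s‖ ^ 2

lemma kstep_eq {n m : ℕ} (a : Fin m → EuclideanSpace ℝ (Fin n)) (η : Fin m → ℝ)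
    (i : Fin m) (z : EuclideanSpace ℝ (Fin n)) :
    kstep a η i z
    = (z - (⟪a i, z⟫_ℝ) • a i + η i • a i : EuclideanSpace ℝ (Fin n)) := by
  ext j
  simp [kstep, sub_mulVec, one_mulVec, vecMulVec, mulVec, dotProduct, PiLp.inner_apply,
    Finset.mul_sum, mul_comm, mul_left_comm]

lemma kstep_norm_sq {n m : ℕ} (a : Fin m → EuclideanSpace ℝ (Fin n)) (η : Fin m → ℝ)
    (i : Fin m) (hai : ‖a i‖ = 1) (z : EuclideanSpace ℝ (Fin n)) :
    ‖kstep a η i z‖ ^ 2 = ‖z‖ ^ 2 - (⟪a i, z⟫_ℝ) ^ 2 + η i ^ 2 := by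
  rw [kstep_eq]
  set d := ⟪a i, z⟫_ℝ with hd
  have h1 : ⟪(z - d • a i : EuclideanSpace ℝ (Fin n)), η i • a i⟫_ℝ = 0 := by
    rw [inner_sub_left, inner_smul_left, inner_smul_right, inner_smul_right,
      real_inner_self_eq_norm_sq, hai]
    simp [real_inner_comm (a i) z, ← hd]
    ring
  have h2 : ‖(z - d • a i : EuclideanSpace ℝ (Fin n))‖ ^ 2 = ‖z‖ ^ 2 - d ^ 2 := by
    rw [norm_sub_sq_real, inner_smul_right, norm_smul, real_inner_comm (a i) z, hai]
    simp only [← hd, Real.norm_eq_abs, mul_one]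
    rw [sq_abs]
    ring
  rw [norm_add_sq_real, h1, h2, norm_smul, hai]
  simp only [Real.norm_eq_abs, mul_one, mul_pow, sq_abs]
  ring

lemma inner_eq_dot {n : ℕ} (x y : EuclideanSpace ℝ (Fin n)) :
    ⟪x, y⟫_ℝ = dotProduct (show Fin n → ℝ from x) (show Fin n → ℝ from y) := by
  simp [PiLp.inner_apply, dotProduct, mul_comm]

lemma rayleigh {n : ℕ} (P : Matrix (Fin n) (Fin n) ℝ) (hPh : P.IsHermitian)
    (lam : ℝ) (hlam : lam = ⨆ j, hPh.eigenvalues j) (z : Fin n → ℝ) :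
    dotProduct z (P *ᵥ z) ≤ lam * dotProduct z z := by
  have hle : ∀ j, hPh.eigenvalues j ≤ lam := by
    intro j
    rw [hlam]
    exact le_ciSup (Set.Finite.bddAbove (Set.finite_range _)) j
  set U : Matrix (Fin n) (Fin n) ℝ := (hPh.eigenvectorUnitary : Matrix (Fin n) (Fin n) ℝ) with hU
  have hUU : U * star U = 1 := (Matrix.mem_unitaryGroup_iff).mp hPh.eigenvectorUnitary.2
  set y : Fin n → ℝ := (star U) *ᵥ z with hy
  have hDiag : P = U * diagonal hPh.eigenvalues * star U := by
    have := hPh.spectral_theorem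
    simpa using this
  have hzy : dotProduct z (P *ᵥ z) = dotProduct y ((diagonal hPh.eigenvalues) *ᵥ y) := by
    conv_lhs => rw [hDiag]
    rw [← mulVec_mulVec, ← mulVec_mulVec, dotProduct_mulVec]
    congr 1
    rw [hy, ← mulVec_transpose]
    congr 1
  have hyy : dotProduct y y = dotProduct z z := by
    rw [hy]
    nth_rewrite 1 [dotProduct_mulVec]
    have : ((star U) *ᵥ z) ᵥ* (star U) = (star U)ᵀ *ᵥ ((star U) *ᵥ z) := by
      rw [← mulVec_transpose]
    rw [this, mulVec_mulVec]
    have h2 : (star U)ᵀ = U := by simp [star_eq_conjTranspose]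
    rw [h2, hUU, one_mulVec]
  calc dotProduct z (P *ᵥ z) = ∑ j, hPh.eigenvalues j * (y j)^2 := by
        rw [hzy]; simp [dotProduct, mulVec_diagonal]; apply Finset.sum_congr rfl; intro x _; ring
    _ ≤ ∑ j, lam * (y j)^2 := by
        apply Finset.sum_le_sum; intro j _
        exact mul_le_mul_of_nonneg_right (hle j) (sq_nonneg _)
    _ = lam * dotProduct y y := by simp [dotProduct, Finset.mul_sum, sq]
    _ = lam * dotProduct z z := by rw [hyy]

lemma quad_eq {n m : ℕ} (a : Fin m → EuclideanSpace ℝ (Fin n)) (p : Fin m → ℝ)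
    (P : Matrix (Fin n) (Fin n) ℝ)
    (hP : P = ∑ i, p i • ((1 : Matrix (Fin n) (Fin n) ℝ) - vecMulVec (a i) (a i)))
    (z : EuclideanSpace ℝ (Fin n)) :
    dotProduct (show Fin n → ℝ from z) (P *ᵥ (show Fin n → ℝ from z))
      = ∑ i, p i * (‖z‖ ^ 2 - (⟪a i, z⟫_ℝ) ^ 2) := by
  subst hP
  have hsumv : (∑ i, p i • ((1 : Matrix (Fin n) (Fin n) ℝ) - vecMulVec (a i) (a i)))
      *ᵥ (show Fin n → ℝ from z)
      = ∑ i, p i • (((1 : Matrix (Fin n) (Fin n) ℝ) - vecMulVec (a i) (a i))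
          *ᵥ (show Fin n → ℝ from z)) := by
    ext j
    simp [mulVec, dotProduct, Matrix.sum_apply, Finset.sum_mul, Finset.mul_sum]
    rw [Finset.sum_comm]
    apply Finset.sum_congr rfl; intro x _; apply Finset.sum_congr rfl; intro y _; ring
  have hdsum : dotProduct (show Fin n → ℝ from z)
      (∑ i, p i • (((1 : Matrix (Fin n) (Fin n) ℝ) - vecMulVec (a i) (a i))
          *ᵥ (show Fin n → ℝ from z)))
      = ∑ i, dotProduct (show Fin n → ℝ from z)
          (p i • (((1 : Matrix (Fin n) (Fin n) ℝ) - vecMulVec (a i) (a i))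
            *ᵥ (show Fin n → ℝ from z))) := by
    simp [dotProduct, Finset.mul_sum, Finset.sum_apply]
    rw [Finset.sum_comm]
  rw [hsumv, hdsum]
  apply Finset.sum_congr rfl
  intro i _
  rw [dotProduct_smul, smul_eq_mul]
  congr 1
  have hproj : ((1 : Matrix (Fin n) (Fin n) ℝ) - vecMulVec (a i) (a i))
      *ᵥ (show Fin n → ℝ from z)
      = (show Fin n → ℝ from z) - (⟪a i, z⟫_ℝ) • (show Fin n → ℝ from a i) := by
    have h0 := kstep_eq a (fun _ => 0) i z
    simp only [kstep, zero_smul, add_zero] at h0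
    exact congrArg WithLp.ofLp h0
  rw [hproj, dotProduct_sub, dotProduct_smul, smul_eq_mul]
  have h1 : dotProduct (show Fin n → ℝ from z) (show Fin n → ℝ from z) = ‖z‖ ^ 2 := by
    rw [← inner_eq_dot, real_inner_self_eq_norm_sq]
  have h2 : dotProduct (show Fin n → ℝ from z) (show Fin n → ℝ from a i) = ⟪a i, z⟫_ℝ := by
    rw [← inner_eq_dot, real_inner_comm]
  rw [h1, h2]
  ring

theorem zouzias_freris_bound {n m : ℕ}
    (a : Fin m → EuclideanSpace ℝ (Fin n)) (ha : ∀ i, ‖a i‖ = 1)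
    (hspan : Submodule.span ℝ (Set.range a) = ⊤)
    (p : Fin m → ℝ) (hp : ∀ i, 0 < p i) (hsum : ∑ i, p i = 1)
    (η : Fin m → ℝ) (z0 : EuclideanSpace ℝ (Fin n))
    (P : Matrix (Fin n) (Fin n) ℝ)
    (hP : P = ∑ i, p i • ((1 : Matrix (Fin n) (Fin n) ℝ) - vecMulVec (a i) (a i)))
    (hPh : P.IsHermitian)
    (lam : ℝ) (hlam : lam = ⨆ j, hPh.eigenvalues j) (hlam1 : lam < 1) :
    ∀ k : ℕ, kMSE a η p z0 k ≤
      lam ^ k * ‖z0‖ ^ 2 + (∑ i, p i * η i ^ 2) / (1 - lam) := by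
  set C : ℝ := ∑ i, p i * η i ^ 2 with hC
  have hCnn : 0 ≤ C := Finset.sum_nonneg fun i _ => mul_nonneg (hp i).le (sq_nonneg _)
  -- positive semidefiniteness and nonnegativity of lam
  have hPsd : P.PosSemidef := by
    refine Matrix.PosSemidef.of_dotProduct_mulVec_nonneg hPh fun x => ?_
    rw [star_trivial]
    have hq := quad_eq a p P hP (WithLp.toLp 2 x)
    simp only [WithLp.ofLp_toLp] at hq
    rw [hq]
    apply Finset.sum_nonneg
    intro i _
    apply mul_nonneg (hp i).le
    have hcs := real_inner_mul_inner_self_le (a i) (WithLp.toLp 2 x)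
    rw [real_inner_self_eq_norm_sq, real_inner_self_eq_norm_sq, ha i] at hcs
    nlinarith [hcs]
  have hlam0 : 0 ≤ lam := by
    rcases isEmpty_or_nonempty (Fin n) with h | h
    · rw [hlam, Real.iSup_of_isEmpty]
    · obtain ⟨j⟩ := h
      have h1 : hPh.eigenvalues j ≤ lam := by
        rw [hlam]; exact le_ciSup (Set.Finite.bddAbove (Set.finite_range _)) j
      exact le_trans (hPsd.eigenvalues_nonneg j) h1
  -- one-step inequality
  have one_step : ∀ z : EuclideanSpace ℝ (Fin n),
      ∑ i, p i * ‖kstep a η i z‖ ^ 2 ≤ lam * ‖z‖ ^ 2 + C := by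
    intro z
    have hexp : ∑ i, p i * ‖kstep a η i z‖ ^ 2
        = (∑ i, p i * (‖z‖ ^ 2 - (⟪a i, z⟫_ℝ) ^ 2)) + C := by
      rw [hC, ← Finset.sum_add_distrib]
      apply Finset.sum_congr rfl
      intro i _
      rw [kstep_norm_sq a η i (ha i) z]
      ring
    rw [hexp, ← quad_eq a p P hP z]
    have hray := rayleigh P hPh lam hlam (show Fin n → ℝ from z)
    have hzz : dotProduct (show Fin n → ℝ from z) (show Fin n → ℝ from z) = ‖z‖ ^ 2 := by
      rw [← inner_eq_dot, real_inner_self_eq_norm_sq]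
    rw [hzz] at hray
    linarith
  -- recursion for kMSE
  have ktraj_cons : ∀ (z : EuclideanSpace ℝ (Fin n)) (k : ℕ) (i : Fin m)
      (t : Fin k → Fin m), ktraj a η z (Fin.cons i t) = ktraj a η (kstep a η i z) t := by
    intro z k i t
    simp [ktraj, List.ofFn_succ, Fin.cons_succ, Fin.cons_zero]
  have kMSE_succ : ∀ (z : EuclideanSpace ℝ (Fin n)) (k : ℕ),
      kMSE a η p z (k + 1) = ∑ i, p i * kMSE a η p (kstep a η i z) k := by
    intro z k
    rw [kMSE]
    rw [← Equiv.sum_comp (Fin.consEquiv (fun _ => Fin m))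
      (fun s : Fin (k+1) → Fin m => (∏ j, p (s j)) * ‖ktraj a η z s‖ ^ 2)]
    rw [Fintype.sum_prod_type]
    apply Finset.sum_congr rfl
    intro i _
    rw [kMSE, Finset.mul_sum]
    apply Finset.sum_congr rfl
    intro t _
    have h1 : (Fin.consEquiv (fun _ => Fin m)) (i, t) = Fin.cons i t := rfl
    rw [h1, ktraj_cons z k i t]
    have h2 : ∏ j, p ((Fin.cons i t : Fin (k+1) → Fin m) j) = p i * ∏ j, p (t j) := by
      rw [Fin.prod_univ_succ]
      simp [Fin.cons_succ, Fin.cons_zero]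
    rw [h2]
    ring
  -- main induction
  have main : ∀ (k : ℕ) (z : EuclideanSpace ℝ (Fin n)),
      kMSE a η p z k ≤ lam ^ k * ‖z‖ ^ 2 + C * ∑ j ∈ Finset.range k, lam ^ j := by
    intro k
    induction k with
    | zero =>
      intro z
      simp [kMSE, ktraj]
    | succ k ih =>
      intro z
      rw [kMSE_succ z k]
      calc ∑ i, p i * kMSE a η p (kstep a η i z) k
          ≤ ∑ i, p i * (lam ^ k * ‖kstep a η i z‖ ^ 2
              + C * ∑ j ∈ Finset.range k, lam ^ j) := by
            apply Finset.sum_le_sum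
            intro i _
            exact mul_le_mul_of_nonneg_left (ih (kstep a η i z)) (hp i).le
        _ = lam ^ k * (∑ i, p i * ‖kstep a η i z‖ ^ 2)
              + C * ∑ j ∈ Finset.range k, lam ^ j := by
            simp only [mul_add]
            rw [Finset.sum_add_distrib, ← Finset.sum_mul, hsum, one_mul]
            congr 1
            rw [Finset.mul_sum]
            apply Finset.sum_congr rfl
            intro i _
            ring
        _ ≤ lam ^ k * (lam * ‖z‖ ^ 2 + C) + C * ∑ j ∈ Finset.range k, lam ^ j := by
            have := mul_le_mul_of_nonneg_left (one_step z) (pow_nonneg hlam0 k)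
            linarith
        _ = lam ^ (k + 1) * ‖z‖ ^ 2 + C * ∑ j ∈ Finset.range (k + 1), lam ^ j := by
            rw [Finset.sum_range_succ]
            ring
  -- conclude
  intro k
  refine le_trans (main k z0) ?_
  have h1l : 0 < 1 - lam := by linarith
  have hS : ∑ j ∈ Finset.range k, lam ^ j ≤ 1 / (1 - lam) := by
    have hgeom : ∑ j ∈ Finset.range k, lam ^ j = (1 - lam ^ k) / (1 - lam) := by
      rw [geom_sum_eq (ne_of_lt hlam1)]
      rw [div_eq_div_iff (by linarith) (by linarith)]
      ring
    rw [hgeom]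
    rw [div_le_div_iff₀ h1l h1l]
    have := pow_nonneg hlam0 k
    nlinarith
  have : C * ∑ j ∈ Finset.range k, lam ^ j ≤ C / (1 - lam) := by
    calc C * ∑ j ∈ Finset.range k, lam ^ j ≤ C * (1 / (1 - lam)) :=
          mul_le_mul_of_nonneg_left hS hCnn
      _ = C / (1 - lam) := by rw [mul_one_div]
  linarith
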